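/- Path length under slackness γ: if the average generalized Minty property holds with slackness γ ≥ 0, i.e., for any sequence there is x* with (1/T)Σ_t ⟨x⁽ᵗ⁾ − x*, F(x⁽ᵗ⁾)∘A(x⁽ᵗ⁾)∘W(x*)⟩ ≥ −γ, then under the step-size condition η ≤ (1/4)√(ℓ/(h³L² + h B_F² α² d)), the iterates of the modified optimistic gradient descent satisfy Σ_{t=1}^T (‖x⁽ᵗ⁾ − x̂⁽ᵗ⁾‖₂² + ‖x⁽ᵗ⁾ − x̂⁽ᵗ⁺¹⁾‖₂²) ≤ 2 D_X² h/ℓ + (4ηγ/ℓ)·T, so some iterate t has ‖x⁽ᵗ⁾ − x̂⁽ᵗ⁾‖₂, ‖x⁽ᵗ⁾ − x̂⁽ᵗ⁺¹⁾‖₂ ≤ √(4ηγ/ℓ + 2D_X² h/(ℓT)). -/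

import Mathlib

open Finset RealInnerProductSpace

lemma aux_normsq_sub {ι : Type*} [Fintype ι] (v w : EuclideanSpace ℝ ι) :
    ‖v - w‖ ^ 2 = ∑ i, (v i - w i) ^ 2 := by
  rw [EuclideanSpace.norm_eq, Real.sq_sqrt (by positivity)]
  simp [sq_abs]

lemma aux_le_zero {S N : ℝ} (hN : 0 ≤ N)
    (H : ∀ t : ℝ, 0 < t → t ≤ 1 → 2 * t * S ≤ t ^ 2 * N) : S ≤ 0 := by
  by_contra hS
  push_neg at hS
  rcases eq_or_lt_of_le hN with hN0 | hN0
  · have := H 1 one_pos le_rfl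
    nlinarith
  · have ht1 : 0 < min 1 (S / N) := lt_min one_pos (div_pos hS hN0)
    have h1 := H _ ht1 (min_le_left _ _)
    have h2 : min 1 (S / N) ≤ S / N := min_le_right _ _
    have h3 : min 1 (S / N) * N ≤ S := by
      have h4 := mul_le_mul_of_nonneg_right h2 hN0.le
      rwa [div_mul_cancel₀ S (ne_of_gt hN0)] at h4
    nlinarith [mul_pos ht1 hS, mul_le_mul_of_nonneg_left h3 ht1.le]

lemma aux_CS {n : Type*} [Fintype n] (lam : n → ℝ) (hlam : ∀ p, 0 ≤ lam p) (a b : n → ℝ) :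
    (∑ p, lam p * (a p * b p)) ^ 2 ≤ (∑ p, lam p * (a p) ^ 2) * (∑ p, lam p * (b p) ^ 2) := by
  have h := Finset.sum_mul_sq_le_sq_mul_sq Finset.univ
    (fun p => Real.sqrt (lam p) * a p) (fun p => Real.sqrt (lam p) * b p)
  have e1 : ∑ p, (Real.sqrt (lam p) * a p) * (Real.sqrt (lam p) * b p)
      = ∑ p, lam p * (a p * b p) :=
    Finset.sum_congr rfl fun p _ => by
      have h2 := Real.mul_self_sqrt (hlam p); linear_combination a p * b p * h2
  have e2 : ∑ p, (Real.sqrt (lam p) * a p) ^ 2 = ∑ p, lam p * (a p) ^ 2 :=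
    Finset.sum_congr rfl fun p _ => by
      have h2 := Real.mul_self_sqrt (hlam p); linear_combination (a p) ^ 2 * h2
  have e3 : ∑ p, (Real.sqrt (lam p) * b p) ^ 2 = ∑ p, lam p * (b p) ^ 2 :=
    Finset.sum_congr rfl fun p _ => by
      have h2 := Real.mul_self_sqrt (hlam p); linear_combination (b p) ^ 2 * h2
  rw [e1, e2, e3] at h
  exact h

lemma aux_F {QE A QD η : ℝ} (hη : 0 < η) (hQE : 0 ≤ QE) (hQD : 0 ≤ QD)
    (hDk : QE ≤ η * A) (hCS : A ^ 2 ≤ QD * QE) : η * A ≤ η ^ 2 * QD := by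
  rcases le_or_gt A 0 with h0 | h0
  · have h1 : η * A ≤ 0 := mul_nonpos_iff.mpr (Or.inl ⟨hη.le, h0⟩)
    nlinarith
  · have h1 : (η * A) ^ 2 ≤ η ^ 2 * QD * QE := by nlinarith
    have h2 : QE ≤ η * A := hDk
    have h3 : 0 < η * A := mul_pos hη h0
    nlinarith [h1, h3, mul_le_mul_of_nonneg_left h2 (mul_nonneg (sq_nonneg η) hQD)]

lemma aux_descent {n : Type*} [Fintype n] (lam : n → ℝ)
    (zh g p₀ y : EuclideanSpace ℝ n) (η : ℝ)
    (hVI : ∑ p, lam p * (((zh - η • g) p - p₀ p) * (y p - p₀ p)) ≤ 0) :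
    ∑ p, lam p * (p₀ p - y p) ^ 2 ≤
      ∑ p, lam p * (zh p - y p) ^ 2 - ∑ p, lam p * (zh p - p₀ p) ^ 2
        - 2 * η * ∑ p, lam p * (g p * (p₀ p - y p)) := by
  have e : (∑ p, lam p * (p₀ p - y p) ^ 2) - (∑ p, lam p * (zh p - y p) ^ 2)
      + (∑ p, lam p * (zh p - p₀ p) ^ 2) + 2 * η * (∑ p, lam p * (g p * (p₀ p - y p)))
      - 2 * (∑ p, lam p * (((zh - η • g) p - p₀ p) * (y p - p₀ p))) = 0 := by
    simp only [PiLp.sub_apply, PiLp.smul_apply, smul_eq_mul, Finset.mul_sum,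
      ← Finset.sum_sub_distrib, ← Finset.sum_add_distrib]
    exact Finset.sum_eq_zero fun p _ => by ring
  linarith

lemma aux_blockVI {d m : ℕ} (Z : Fin d → Set (Fin m → ℝ))
    (X : Set (EuclideanSpace ℝ (Fin d × Fin m)))
    (hX : X = {x | ∀ r : Fin d, (fun j => x (r, j)) ∈ Z r})
    (hXc : Convex ℝ X)
    (proj : EuclideanSpace ℝ (Fin d × Fin m) → EuclideanSpace ℝ (Fin d × Fin m))
    (hproj : ∀ v, proj v ∈ X ∧ ∀ y ∈ X, ‖v - proj v‖ ≤ ‖v - y‖)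
    (lam : Fin d → ℝ) (hlam : ∀ r, 0 ≤ lam r)
    (v y : EuclideanSpace ℝ (Fin d × Fin m)) (hy : y ∈ X) :
    ∑ p : Fin d × Fin m, lam p.1 * ((v p - proj v p) * (y p - proj v p)) ≤ 0 := by
  set p₀ := proj v with hp₀def
  have hp₀X : p₀ ∈ X := (hproj v).1
  have key : ∀ r : Fin d,
      (∑ j, (v (r, j) - p₀ (r, j)) * (y (r, j) - p₀ (r, j))) ≤ 0 := by
    intro r
    refine aux_le_zero (N := ∑ j, (y (r, j) - p₀ (r, j)) ^ 2) (by positivity) ?_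
    intro t ht0 ht1
    set yt : EuclideanSpace ℝ (Fin d × Fin m) :=
      WithLp.toLp 2 (fun p' => if p'.1 = r then p₀ p' + t * (y p' - p₀ p') else p₀ p') with hyt
    have hytX : yt ∈ X := by
      have hz := hXc hp₀X hy (by linarith : (0:ℝ) ≤ 1 - t) ht0.le (by ring)
      rw [hX]
      simp only [Set.mem_setOf_eq]
      intro r'
      rw [hX] at hz hp₀X
      simp only [Set.mem_setOf_eq] at hz hp₀X
      by_cases hr' : r' = r
      · subst hr'
        have hfun : (fun j => yt (r', j))
            = fun j => ((1 - t) • p₀ + t • y) (r', j) := by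
          funext j
          simp [hyt, PiLp.add_apply, PiLp.smul_apply, smul_eq_mul]
          ring
        rw [hfun]
        exact hz r'
      · have hfun : (fun j => yt (r', j)) = fun j => p₀ (r', j) := by
          funext j
          simp only [hyt, PiLp.toLp_apply]
          rw [if_neg (by simpa using hr')]
        rw [hfun]
        exact hp₀X r'
    have hle := (hproj v).2 yt hytX
    have hsq : ‖v - p₀‖ ^ 2 ≤ ‖v - yt‖ ^ 2 := pow_le_pow_left₀ (norm_nonneg _) hle 2
    rw [aux_normsq_sub, aux_normsq_sub, Fintype.sum_prod_type, Fintype.sum_prod_type] at hsq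
    have hoff : ∑ r' ∈ Finset.univ.erase r, ∑ j, (v (r', j) - p₀ (r', j)) ^ 2
        = ∑ r' ∈ Finset.univ.erase r, ∑ j, (v (r', j) - yt (r', j)) ^ 2 := by
      refine Finset.sum_congr rfl fun r' hr' => Finset.sum_congr rfl fun j _ => ?_
      have hne : r' ≠ r := (Finset.mem_erase.mp hr').1
      have : yt (r', j) = p₀ (r', j) := by
        simp only [hyt, PiLp.toLp_apply]
        rw [if_neg (by simpa using hne)]
      rw [this]
    have h1 := Finset.add_sum_erase Finset.univ
      (fun r' => ∑ j, (v (r', j) - p₀ (r', j)) ^ 2) (Finset.mem_univ r)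
    have h2 := Finset.add_sum_erase Finset.univ
      (fun r' => ∑ j, (v (r', j) - yt (r', j)) ^ 2) (Finset.mem_univ r)
    have hblock : (∑ j, (v (r, j) - p₀ (r, j)) ^ 2)
        ≤ ∑ j, (v (r, j) - yt (r, j)) ^ 2 := by
      simp only at h1 h2
      linarith
    have hytapp : ∀ j : Fin m, yt (r, j) = p₀ (r, j) + t * (y (r, j) - p₀ (r, j)) := by
      intro j
      simp [hyt]
    have e : (∑ j, (v (r, j) - yt (r, j)) ^ 2) - (∑ j, (v (r, j) - p₀ (r, j)) ^ 2)
        + 2 * t * (∑ j, (v (r, j) - p₀ (r, j)) * (y (r, j) - p₀ (r, j)))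
        - t ^ 2 * (∑ j, (y (r, j) - p₀ (r, j)) ^ 2) = 0 := by
      simp only [Finset.mul_sum, ← Finset.sum_sub_distrib, ← Finset.sum_add_distrib]
      refine Finset.sum_eq_zero fun j _ => ?_
      rw [hytapp j]
      ring
    linarith
  have e : ∑ p : Fin d × Fin m, lam p.1 * ((v p - p₀ p) * (y p - p₀ p))
      = ∑ r, lam r * ∑ j, (v (r, j) - p₀ (r, j)) * (y (r, j) - p₀ (r, j)) := by
    rw [Fintype.sum_prod_type]
    exact Finset.sum_congr rfl fun r _ => by rw [Finset.mul_sum]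
  rw [e]
  exact Finset.sum_nonpos fun r _ => mul_nonpos_iff.mpr (Or.inl ⟨hlam r, key r⟩)

set_option maxHeartbeats 1600000 in
/-- Path length bound under the average generalized Minty property with slackness `γ`:
`Σ_{t=1}^T (‖x⁽ᵗ⁾ − x̂⁽ᵗ⁾‖² + ‖x⁽ᵗ⁾ − x̂⁽ᵗ⁺¹⁾‖²) ≤ 2 D_X² h/ℓ + (4ηγ/ℓ)·T`, and some
iterate `t ∈ [1,T]` has `‖x⁽ᵗ⁾ − x̂⁽ᵗ⁾‖, ‖x⁽ᵗ⁾ − x̂⁽ᵗ⁺¹⁾‖ ≤ √(4ηγ/ℓ + 2D_X²h/(ℓT))`. -/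
theorem ogd_path_length_with_slackness {d m : ℕ}
    (Z : Fin d → Set (Fin m → ℝ))
    (X : Set (EuclideanSpace ℝ (Fin d × Fin m)))
    (hX : X = {x | ∀ r : Fin d, (fun j => x (r, j)) ∈ Z r})
    (hXc : Convex ℝ X) (hXk : IsCompact X)
    (F : EuclideanSpace ℝ (Fin d × Fin m) → EuclideanSpace ℝ (Fin d × Fin m))
    (L BF : ℝ) (hL : ∀ x y, ‖F x - F y‖ ≤ L * ‖x - y‖)
    (hBF : ∀ x ∈ X, ∀ r : Fin d, Real.sqrt (∑ j, (F x (r, j)) ^ 2) ≤ BF)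
    (a w : Fin d → EuclideanSpace ℝ (Fin d × Fin m) → ℝ)
    (α ℓ h : ℝ) (hℓ : 0 < ℓ)
    (haLip : ∀ r x y, |a r x - a r y| ≤ α * ‖x - y‖)
    (hab : ∀ r, ∀ x ∈ X, ℓ ≤ a r x ∧ a r x ≤ h)
    (hwb : ∀ r, ∀ x ∈ X, ℓ ≤ w r x ∧ w r x ≤ h)
    (γ : ℝ) (hγ : 0 ≤ γ)
    (hMinty : ∀ (T : ℕ) (xs : Fin T → EuclideanSpace ℝ (Fin d × Fin m)),
      (∀ t, xs t ∈ X) → ∃ xstar ∈ X,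
        -(γ * T) ≤ ∑ t, ∑ p : Fin d × Fin m,
              (xs t p - xstar p) * (F (xs t) p * a p.1 (xs t) * w p.1 xstar))
    (η D : ℝ) (hη : 0 < η)
    (hηle : η ≤ (1 / 4) * Real.sqrt (ℓ / (h ^ 3 * L ^ 2 + h * BF ^ 2 * α ^ 2 * d)))
    (hD : ∀ x ∈ X, ∀ y ∈ X, ‖x - y‖ ≤ D)
    (proj : EuclideanSpace ℝ (Fin d × Fin m) → EuclideanSpace ℝ (Fin d × Fin m))
    (hproj : ∀ v, proj v ∈ X ∧ ∀ y ∈ X, ‖v - proj v‖ ≤ ‖v - y‖)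
    (u x xh : ℕ → EuclideanSpace ℝ (Fin d × Fin m))
    (hu : ∀ t, ∀ p : Fin d × Fin m, u t p = a p.1 (x t) * F (x t) p)
    (hx0 : x 0 ∈ X) (hinit : xh 1 = x 0)
    (hxup : ∀ t, 1 ≤ t → x t = proj (xh t - η • u (t - 1)))
    (hxhup : ∀ t, 1 ≤ t → xh (t + 1) = proj (xh t - η • u t))
    (T : ℕ) :
    (∑ t ∈ Finset.Icc 1 T, (‖x t - xh t‖ ^ 2 + ‖x t - xh (t + 1)‖ ^ 2) ≤
        2 * D ^ 2 * h / ℓ + (4 * η * γ / ℓ) * T) ∧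
      (1 ≤ T → ∃ t ∈ Finset.Icc 1 T,
        ‖x t - xh t‖ ≤ Real.sqrt (4 * η * γ / ℓ + 2 * D ^ 2 * h / (ℓ * T)) ∧
        ‖x t - xh (t + 1)‖ ≤ Real.sqrt (4 * η * γ / ℓ + 2 * D ^ 2 * h / (ℓ * T))) := by
  -- degenerate case: nonpositive step-size denominator
  by_cases hCpos : 0 < h ^ 3 * L ^ 2 + h * BF ^ 2 * α ^ 2 * (d : ℝ)
  case neg =>
    push_neg at hCpos
    have hs0 : Real.sqrt (ℓ / (h ^ 3 * L ^ 2 + h * BF ^ 2 * α ^ 2 * (d : ℝ))) = 0 := by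
      rcases eq_or_lt_of_le hCpos with hc0 | hc0
      · rw [hc0, div_zero, Real.sqrt_zero]
      · exact Real.sqrt_eq_zero'.mpr (le_of_lt (div_neg_of_pos_of_neg hℓ hc0))
    rw [hs0] at hηle
    norm_num at hηle
    exact absurd hη (by linarith)
  case pos =>
  have hh : 0 < h := by
    by_contra hh0
    push_neg at hh0
    have e2 : (0:ℝ) ≤ h ^ 2 * L ^ 2 + BF ^ 2 * α ^ 2 * (d : ℝ) := by positivity
    nlinarith [mul_nonpos_iff.mpr (Or.inr ⟨hh0, e2⟩)]
  have hK : η ^ 2 * (h ^ 3 * L ^ 2 + h * BF ^ 2 * α ^ 2 * (d : ℝ)) ≤ ℓ / 16 := by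
    have h1 : η ^ 2 ≤ (1 / 4 * Real.sqrt (ℓ / (h ^ 3 * L ^ 2 + h * BF ^ 2 * α ^ 2 * (d : ℝ)))) ^ 2 :=
      pow_le_pow_left₀ hη.le hηle 2
    have h2 : (1 / 4 * Real.sqrt (ℓ / (h ^ 3 * L ^ 2 + h * BF ^ 2 * α ^ 2 * (d : ℝ)))) ^ 2
        = (1 / 16) * (ℓ / (h ^ 3 * L ^ 2 + h * BF ^ 2 * α ^ 2 * (d : ℝ))) := by
      rw [mul_pow, Real.sq_sqrt (le_of_lt (div_pos hℓ hCpos))]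
      norm_num
    rw [h2] at h1
    have h3 := mul_le_mul_of_nonneg_right h1 hCpos.le
    have h4 : 1 / 16 * (ℓ / (h ^ 3 * L ^ 2 + h * BF ^ 2 * α ^ 2 * (d : ℝ)))
        * (h ^ 3 * L ^ 2 + h * BF ^ 2 * α ^ 2 * (d : ℝ)) = ℓ / 16 := by
      have hC0 : (h ^ 3 * L ^ 2 + h * BF ^ 2 * α ^ 2 * (d : ℝ)) ≠ 0 := ne_of_gt hCpos
      rw [mul_assoc, div_mul_cancel₀ ℓ hC0]
      ring
    linarith
  -- memberships
  have hmem : ∀ t, x t ∈ X := by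
    intro t
    cases t with
    | zero => exact hx0
    | succ n => rw [hxup (n + 1) (by omega)]; exact (hproj _).1
  have hxhmem : ∀ t : ℕ, 1 ≤ t → xh t ∈ X := by
    intro t ht
    obtain ⟨n, rfl⟩ : ∃ n, t = n + 1 := ⟨t - 1, by omega⟩
    cases n with
    | zero => rw [hinit]; exact hx0
    | succ k => rw [hxhup (k + 1) (by omega)]; exact (hproj _).1
  -- Minty point for the sequence x 1, ..., x T
  obtain ⟨xstar, hxsX, hM⟩ := hMinty T (fun i => x (↑i + 1)) (fun i => hmem _)
  have hlam0 : ∀ p : Fin d × Fin m, 0 ≤ w p.1 xstar :=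
    fun p => le_trans hℓ.le (hwb p.1 xstar hxsX).1
  have hlaml : ∀ p : Fin d × Fin m, ℓ ≤ w p.1 xstar := fun p => (hwb p.1 xstar hxsX).1
  have hlamh : ∀ p : Fin d × Fin m, w p.1 xstar ≤ h := fun p => (hwb p.1 xstar hxsX).2
  -- the per-step inequality
  have STEP : ∀ t : ℕ, 1 ≤ t →
      (∑ p : Fin d × Fin m, w p.1 xstar * (xh (t + 1) p - xstar p) ^ 2)
        + ℓ * ‖x t - xh (t + 1)‖ ^ 2 + ℓ * ‖x t - xh t‖ ^ 2 ≤
      (∑ p : Fin d × Fin m, w p.1 xstar * (xh t p - xstar p) ^ 2)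
        + (ℓ / 2) * (‖x t - xh t‖ ^ 2 + ‖x (t - 1) - xh t‖ ^ 2)
        - 2 * η * (∑ p : Fin d × Fin m, w p.1 xstar * (u t p * (x t p - xstar p))) := by
    intro t ht
    have hz'X : xh (t + 1) ∈ X := by rw [hxhup t ht]; exact (hproj _).1
    have hVI1 : ∀ y ∈ X, ∑ p : Fin d × Fin m,
        w p.1 xstar * (((xh t - η • u t) p - xh (t + 1) p) * (y p - xh (t + 1) p)) ≤ 0 := by
      intro y hy
      have h0 := aux_blockVI Z X hX hXc proj hproj (fun r => w r xstar)
        (fun r => le_trans hℓ.le (hwb r xstar hxsX).1) (xh t - η • u t) y hy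
      rwa [← hxhup t ht] at h0
    have hVI2 : ∀ y ∈ X, ∑ p : Fin d × Fin m,
        w p.1 xstar * (((xh t - η • u (t - 1)) p - x t p) * (y p - x t p)) ≤ 0 := by
      intro y hy
      have h0 := aux_blockVI Z X hX hXc proj hproj (fun r => w r xstar)
        (fun r => le_trans hℓ.le (hwb r xstar hxsX).1) (xh t - η • u (t - 1)) y hy
      rwa [← hxup t ht] at h0
    -- (A)
    have hA : ∑ p : Fin d × Fin m, w p.1 xstar * (xh (t + 1) p - xstar p) ^ 2 ≤
        ∑ p : Fin d × Fin m, w p.1 xstar * (xh t p - xstar p) ^ 2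
          - ∑ p : Fin d × Fin m, w p.1 xstar * (xh t p - xh (t + 1) p) ^ 2
          - 2 * η * ∑ p : Fin d × Fin m, w p.1 xstar * (u t p * (xh (t + 1) p - xstar p)) :=
      aux_descent (fun p => w p.1 xstar) (xh t) (u t) (xh (t + 1)) xstar η (hVI1 xstar hxsX)
    -- (B)
    have hB : ∑ p : Fin d × Fin m, w p.1 xstar * (x t p - xh (t + 1) p) ^ 2 ≤
        ∑ p : Fin d × Fin m, w p.1 xstar * (xh t p - xh (t + 1) p) ^ 2
          - ∑ p : Fin d × Fin m, w p.1 xstar * (xh t p - x t p) ^ 2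
          - 2 * η * ∑ p : Fin d × Fin m, w p.1 xstar * (u (t - 1) p * (x t p - xh (t + 1) p)) :=
      aux_descent (fun p => w p.1 xstar) (xh t) (u (t - 1)) (x t) (xh (t + 1)) η
        (hVI2 (xh (t + 1)) hz'X)
    -- (D) key: Q(e) ≤ η * S(Δu, e)
    have hDkey : (∑ p : Fin d × Fin m, w p.1 xstar * (x t p - xh (t + 1) p) ^ 2) ≤
        η * ∑ p : Fin d × Fin m,
          w p.1 xstar * ((u t p - u (t - 1) p) * (x t p - xh (t + 1) p)) := by
      have h1 := hVI1 (x t) (hmem t)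
      have h2 := hVI2 (xh (t + 1)) hz'X
      have e : η * (∑ p : Fin d × Fin m,
            w p.1 xstar * ((u t p - u (t - 1) p) * (x t p - xh (t + 1) p)))
          - (∑ p : Fin d × Fin m, w p.1 xstar * (x t p - xh (t + 1) p) ^ 2)
          + (∑ p : Fin d × Fin m,
            w p.1 xstar * (((xh t - η • u t) p - xh (t + 1) p) * (x t p - xh (t + 1) p)))
          + (∑ p : Fin d × Fin m,
            w p.1 xstar * (((xh t - η • u (t - 1)) p - x t p) * (xh (t + 1) p - x t p))) = 0 := by
        simp only [PiLp.sub_apply, PiLp.smul_apply, smul_eq_mul, Finset.mul_sum,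
          ← Finset.sum_sub_distrib, ← Finset.sum_add_distrib]
        exact Finset.sum_eq_zero fun p _ => by ring
      linarith
    -- Cauchy-Schwarz and the key real inequality
    have hQE0 : 0 ≤ ∑ p : Fin d × Fin m, w p.1 xstar * (x t p - xh (t + 1) p) ^ 2 :=
      Finset.sum_nonneg fun p _ => mul_nonneg (hlam0 p) (sq_nonneg _)
    have hQD0 : 0 ≤ ∑ p : Fin d × Fin m, w p.1 xstar * (u t p - u (t - 1) p) ^ 2 :=
      Finset.sum_nonneg fun p _ => mul_nonneg (hlam0 p) (sq_nonneg _)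
    have hCS : (∑ p : Fin d × Fin m,
          w p.1 xstar * ((u t p - u (t - 1) p) * (x t p - xh (t + 1) p))) ^ 2 ≤
        (∑ p : Fin d × Fin m, w p.1 xstar * (u t p - u (t - 1) p) ^ 2) *
        (∑ p : Fin d × Fin m, w p.1 xstar * (x t p - xh (t + 1) p) ^ 2) :=
      aux_CS (fun p => w p.1 xstar) hlam0 (fun p => u t p - u (t - 1) p)
        (fun p => x t p - xh (t + 1) p)
    have hF : η * (∑ p : Fin d × Fin m,
          w p.1 xstar * ((u t p - u (t - 1) p) * (x t p - xh (t + 1) p))) ≤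
        η ^ 2 * (∑ p : Fin d × Fin m, w p.1 xstar * (u t p - u (t - 1) p) ^ 2) :=
      aux_F hη hQE0 hQD0 hDkey hCS
    -- bound on Q(Δu)
    have hQDb : (∑ p : Fin d × Fin m, w p.1 xstar * (u t p - u (t - 1) p) ^ 2) ≤
        2 * (h ^ 3 * L ^ 2 + h * BF ^ 2 * α ^ 2 * (d : ℝ)) * ‖x t - x (t - 1)‖ ^ 2 := by
      have s1 : (∑ p : Fin d × Fin m, w p.1 xstar * (u t p - u (t - 1) p) ^ 2)
          ≤ h * ∑ p : Fin d × Fin m, (u t p - u (t - 1) p) ^ 2 := by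
        rw [Finset.mul_sum]
        exact Finset.sum_le_sum fun p _ =>
          mul_le_mul_of_nonneg_right (hlamh p) (sq_nonneg _)
      have s2 : (∑ p : Fin d × Fin m, (u t p - u (t - 1) p) ^ 2) ≤
          ∑ p : Fin d × Fin m,
            (2 * (a p.1 (x t)) ^ 2 * (F (x t) p - F (x (t - 1)) p) ^ 2
              + 2 * (a p.1 (x t) - a p.1 (x (t - 1))) ^ 2 * (F (x (t - 1)) p) ^ 2) := by
        refine Finset.sum_le_sum fun p _ => ?_
        rw [hu t p, hu (t - 1) p]
        nlinarith [sq_nonneg (a p.1 (x t) * (F (x t) p - F (x (t - 1)) p)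
          - (a p.1 (x t) - a p.1 (x (t - 1))) * (F (x (t - 1)) p))]
      have s3 : (∑ p : Fin d × Fin m,
            2 * (a p.1 (x t)) ^ 2 * (F (x t) p - F (x (t - 1)) p) ^ 2) ≤
          2 * h ^ 2 * (L ^ 2 * ‖x t - x (t - 1)‖ ^ 2) := by
        have s3a : (∑ p : Fin d × Fin m,
              2 * (a p.1 (x t)) ^ 2 * (F (x t) p - F (x (t - 1)) p) ^ 2) ≤
            ∑ p : Fin d × Fin m, 2 * h ^ 2 * (F (x t) p - F (x (t - 1)) p) ^ 2 := by
          refine Finset.sum_le_sum fun p _ => ?_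
          have ha1 := hab p.1 (x t) (hmem t)
          have : (a p.1 (x t)) ^ 2 ≤ h ^ 2 := by nlinarith [ha1.1, ha1.2, hℓ]
          nlinarith [sq_nonneg (F (x t) p - F (x (t - 1)) p)]
        have s3b : (∑ p : Fin d × Fin m, 2 * h ^ 2 * (F (x t) p - F (x (t - 1)) p) ^ 2)
            = 2 * h ^ 2 * ‖F (x t) - F (x (t - 1))‖ ^ 2 := by
          rw [aux_normsq_sub, Finset.mul_sum]
        have s3c : ‖F (x t) - F (x (t - 1))‖ ^ 2 ≤ L ^ 2 * ‖x t - x (t - 1)‖ ^ 2 := by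
          have h1 := hL (x t) (x (t - 1))
          have h2 : ‖F (x t) - F (x (t - 1))‖ ^ 2 ≤ (L * ‖x t - x (t - 1)‖) ^ 2 :=
            pow_le_pow_left₀ (norm_nonneg _) h1 2
          nlinarith
        calc (∑ p : Fin d × Fin m,
              2 * (a p.1 (x t)) ^ 2 * (F (x t) p - F (x (t - 1)) p) ^ 2)
            ≤ 2 * h ^ 2 * ‖F (x t) - F (x (t - 1))‖ ^ 2 := by rw [← s3b]; exact s3a
          _ ≤ 2 * h ^ 2 * (L ^ 2 * ‖x t - x (t - 1)‖ ^ 2) :=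
            mul_le_mul_of_nonneg_left s3c (by positivity)
      have s4 : (∑ p : Fin d × Fin m,
            2 * (a p.1 (x t) - a p.1 (x (t - 1))) ^ 2 * (F (x (t - 1)) p) ^ 2) ≤
          2 * (d : ℝ) * (α ^ 2 * ‖x t - x (t - 1)‖ ^ 2) * BF ^ 2 := by
        rw [Fintype.sum_prod_type]
        have perR : ∀ r : Fin d,
            (∑ j, 2 * (a r (x t) - a r (x (t - 1))) ^ 2 * (F (x (t - 1)) (r, j)) ^ 2) ≤
            2 * (α ^ 2 * ‖x t - x (t - 1)‖ ^ 2) * BF ^ 2 := by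
          intro r
          have hΔa : (a r (x t) - a r (x (t - 1))) ^ 2 ≤ α ^ 2 * ‖x t - x (t - 1)‖ ^ 2 := by
            have h1 := haLip r (x t) (x (t - 1))
            nlinarith [abs_nonneg (a r (x t) - a r (x (t - 1))),
              sq_abs (a r (x t) - a r (x (t - 1)))]
          have hS0 : 0 ≤ ∑ j, (F (x (t - 1)) (r, j)) ^ 2 := by positivity
          have hFsum : (∑ j, (F (x (t - 1)) (r, j)) ^ 2) ≤ BF ^ 2 := by
            have h2 := hBF (x (t - 1)) (hmem (t - 1)) r
            nlinarith [Real.sq_sqrt hS0, Real.sqrt_nonneg (∑ j, (F (x (t - 1)) (r, j)) ^ 2)]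
          have e1 : (∑ j, 2 * (a r (x t) - a r (x (t - 1))) ^ 2 * (F (x (t - 1)) (r, j)) ^ 2)
              = 2 * (a r (x t) - a r (x (t - 1))) ^ 2 * ∑ j, (F (x (t - 1)) (r, j)) ^ 2 := by
            rw [Finset.mul_sum]
          rw [e1]
          nlinarith [mul_le_mul hΔa hFsum hS0 (by positivity : (0:ℝ) ≤ α ^ 2 * ‖x t - x (t - 1)‖ ^ 2),
            sq_nonneg (a r (x t) - a r (x (t - 1)))]
        calc (∑ r : Fin d, ∑ j,
              2 * (a r (x t) - a r (x (t - 1))) ^ 2 * (F (x (t - 1)) (r, j)) ^ 2)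
            ≤ ∑ _r : Fin d, 2 * (α ^ 2 * ‖x t - x (t - 1)‖ ^ 2) * BF ^ 2 :=
              Finset.sum_le_sum fun r _ => perR r
          _ = 2 * (d : ℝ) * (α ^ 2 * ‖x t - x (t - 1)‖ ^ 2) * BF ^ 2 := by
              rw [Finset.sum_const, Finset.card_univ, Fintype.card_fin, nsmul_eq_mul]
              ring
      have s5 : (∑ p : Fin d × Fin m, (u t p - u (t - 1) p) ^ 2) ≤
          2 * h ^ 2 * (L ^ 2 * ‖x t - x (t - 1)‖ ^ 2)
            + 2 * (d : ℝ) * (α ^ 2 * ‖x t - x (t - 1)‖ ^ 2) * BF ^ 2 := by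
        have := Finset.sum_add_distrib (s := Finset.univ)
          (f := fun p : Fin d × Fin m =>
            2 * (a p.1 (x t)) ^ 2 * (F (x t) p - F (x (t - 1)) p) ^ 2)
          (g := fun p : Fin d × Fin m =>
            2 * (a p.1 (x t) - a p.1 (x (t - 1))) ^ 2 * (F (x (t - 1)) p) ^ 2)
        linarith [s2, s3, s4, this]
      have s6 := mul_le_mul_of_nonneg_left s5 hh.le
      have e7 : h * (2 * h ^ 2 * (L ^ 2 * ‖x t - x (t - 1)‖ ^ 2)
          + 2 * (d : ℝ) * (α ^ 2 * ‖x t - x (t - 1)‖ ^ 2) * BF ^ 2)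
          = 2 * (h ^ 3 * L ^ 2 + h * BF ^ 2 * α ^ 2 * (d : ℝ)) * ‖x t - x (t - 1)‖ ^ 2 := by
        ring
      linarith
    -- triangle inequality bound
    have htri : ‖x t - x (t - 1)‖ ≤ ‖x t - xh t‖ + ‖x (t - 1) - xh t‖ := by
      have h1 := norm_sub_le (x t - xh t) (x (t - 1) - xh t)
      rwa [sub_sub_sub_cancel_right] at h1
    have htri2 : ‖x t - x (t - 1)‖ ^ 2 ≤
        2 * ‖x t - xh t‖ ^ 2 + 2 * ‖x (t - 1) - xh t‖ ^ 2 := by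
      nlinarith [sq_nonneg (‖x t - xh t‖ - ‖x (t - 1) - xh t‖), norm_nonneg (x t - x (t - 1)),
        norm_nonneg (x t - xh t), norm_nonneg (x (t - 1) - xh t)]
    -- lower bounds by the unweighted norms
    have hlb1 : ℓ * ‖x t - xh (t + 1)‖ ^ 2 ≤
        ∑ p : Fin d × Fin m, w p.1 xstar * (x t p - xh (t + 1) p) ^ 2 := by
      rw [aux_normsq_sub, Finset.mul_sum]
      exact Finset.sum_le_sum fun p _ => mul_le_mul_of_nonneg_right (hlaml p) (sq_nonneg _)
    have hlb2 : ℓ * ‖x t - xh t‖ ^ 2 ≤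
        ∑ p : Fin d × Fin m, w p.1 xstar * (xh t p - x t p) ^ 2 := by
      rw [aux_normsq_sub, Finset.mul_sum]
      refine Finset.sum_le_sum fun p _ => ?_
      rw [show (x t p - xh t p) ^ 2 = (xh t p - x t p) ^ 2 by ring]
      exact mul_le_mul_of_nonneg_right (hlaml p) (sq_nonneg _)
    -- the bilinearity identity (Eq*)
    have hEstar : (∑ p : Fin d × Fin m, w p.1 xstar * (u t p * (xh (t + 1) p - xstar p)))
        + (∑ p : Fin d × Fin m, w p.1 xstar * (u (t - 1) p * (x t p - xh (t + 1) p)))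
        - (∑ p : Fin d × Fin m, w p.1 xstar * (u t p * (x t p - xstar p)))
        + (∑ p : Fin d × Fin m,
            w p.1 xstar * ((u t p - u (t - 1) p) * (x t p - xh (t + 1) p))) = 0 := by
      simp only [← Finset.sum_sub_distrib, ← Finset.sum_add_distrib]
      exact Finset.sum_eq_zero fun p _ => by ring
    -- combine everything
    have c1 : 2 * η ^ 2 * (∑ p : Fin d × Fin m, w p.1 xstar * (u t p - u (t - 1) p) ^ 2)
        ≤ 2 * η ^ 2 * (2 * (h ^ 3 * L ^ 2 + h * BF ^ 2 * α ^ 2 * (d : ℝ))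
            * ‖x t - x (t - 1)‖ ^ 2) :=
      mul_le_mul_of_nonneg_left hQDb (by positivity)
    have c3 : (4 * η ^ 2 * (h ^ 3 * L ^ 2 + h * BF ^ 2 * α ^ 2 * (d : ℝ)))
        * ‖x t - x (t - 1)‖ ^ 2 ≤ (ℓ / 4) * ‖x t - x (t - 1)‖ ^ 2 :=
      mul_le_mul_of_nonneg_right (by linarith) (sq_nonneg _)
    have c4 : (ℓ / 4) * ‖x t - x (t - 1)‖ ^ 2 ≤
        (ℓ / 4) * (2 * ‖x t - xh t‖ ^ 2 + 2 * ‖x (t - 1) - xh t‖ ^ 2) :=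
      mul_le_mul_of_nonneg_left htri2 (by positivity)
    have hEstar2 : 2 * η * (∑ p : Fin d × Fin m, w p.1 xstar * (u t p * (xh (t + 1) p - xstar p)))
        + 2 * η * (∑ p : Fin d × Fin m, w p.1 xstar * (u (t - 1) p * (x t p - xh (t + 1) p)))
        - 2 * η * (∑ p : Fin d × Fin m, w p.1 xstar * (u t p * (x t p - xstar p)))
        + 2 * η * (∑ p : Fin d × Fin m,
            w p.1 xstar * ((u t p - u (t - 1) p) * (x t p - xh (t + 1) p))) = 0 := by
      linear_combination (2 * η) * hEstar
    linarith [hA, hB, hDkey, hF, hlb1, hlb2, hEstar2, c1, c3, c4]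
  -- summation of the per-step inequality
  have SUMS : ∀ n : ℕ,
      (∑ p : Fin d × Fin m, w p.1 xstar * (xh (n + 1) p - xstar p) ^ 2)
        + ℓ * (∑ t ∈ Finset.Icc 1 n, (‖x t - xh t‖ ^ 2 + ‖x t - xh (t + 1)‖ ^ 2)) ≤
      (∑ p : Fin d × Fin m, w p.1 xstar * (xh 1 p - xstar p) ^ 2)
        + (ℓ / 2) * (∑ t ∈ Finset.Icc 1 n, (‖x t - xh t‖ ^ 2 + ‖x (t - 1) - xh t‖ ^ 2))
        - 2 * η * (∑ t ∈ Finset.Icc 1 n,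
            ∑ p : Fin d × Fin m, w p.1 xstar * (u t p * (x t p - xstar p))) := by
    intro n
    induction n with
    | zero =>
      rw [show Finset.Icc 1 0 = (∅ : Finset ℕ) from Finset.Icc_eq_empty (by omega)]
      simp
    | succ n ih =>
      rw [Finset.sum_Icc_succ_top (by omega : 1 ≤ n + 1),
        Finset.sum_Icc_succ_top (by omega : 1 ≤ n + 1),
        Finset.sum_Icc_succ_top (by omega : 1 ≤ n + 1)]
      simp only [Nat.add_sub_cancel]
      have hst := STEP (n + 1) (by omega)
      simp only [Nat.add_sub_cancel] at hst
      linarith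
  -- comparison of the shifted path sum
  have CLAIM : ∀ n : ℕ,
      (∑ t ∈ Finset.Icc 1 n, ‖x (t - 1) - xh t‖ ^ 2) + ‖x n - xh (n + 1)‖ ^ 2 ≤
      (∑ t ∈ Finset.Icc 1 n, ‖x t - xh (t + 1)‖ ^ 2) + ‖x 0 - xh 1‖ ^ 2 := by
    intro n
    induction n with
    | zero =>
      rw [show Finset.Icc 1 0 = (∅ : Finset ℕ) from Finset.Icc_eq_empty (by omega)]
      simp
    | succ n ih =>
      rw [Finset.sum_Icc_succ_top (by omega : 1 ≤ n + 1),
        Finset.sum_Icc_succ_top (by omega : 1 ≤ n + 1)]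
      simp only [Nat.add_sub_cancel]
      linarith
  have hq0 : ‖x 0 - xh 1‖ ^ 2 = 0 := by
    rw [hinit, sub_self]
    simp
  have hSR : (∑ t ∈ Finset.Icc 1 T, (‖x t - xh t‖ ^ 2 + ‖x (t - 1) - xh t‖ ^ 2)) ≤
      ∑ t ∈ Finset.Icc 1 T, (‖x t - xh t‖ ^ 2 + ‖x t - xh (t + 1)‖ ^ 2) := by
    have e1 : (∑ t ∈ Finset.Icc 1 T, (‖x t - xh t‖ ^ 2 + ‖x (t - 1) - xh t‖ ^ 2))
        = (∑ t ∈ Finset.Icc 1 T, ‖x t - xh t‖ ^ 2)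
          + ∑ t ∈ Finset.Icc 1 T, ‖x (t - 1) - xh t‖ ^ 2 := Finset.sum_add_distrib
    have e2 : (∑ t ∈ Finset.Icc 1 T, (‖x t - xh t‖ ^ 2 + ‖x t - xh (t + 1)‖ ^ 2))
        = (∑ t ∈ Finset.Icc 1 T, ‖x t - xh t‖ ^ 2)
          + ∑ t ∈ Finset.Icc 1 T, ‖x t - xh (t + 1)‖ ^ 2 := Finset.sum_add_distrib
    have h1 := CLAIM T
    have h2 : (0:ℝ) ≤ ‖x T - xh (T + 1)‖ ^ 2 := sq_nonneg _
    linarith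
  -- Minty bound on the sum of G terms
  have hGM : -(γ * ↑T) ≤ ∑ t ∈ Finset.Icc 1 T,
      ∑ p : Fin d × Fin m, w p.1 xstar * (u t p * (x t p - xstar p)) := by
    refine le_trans hM (le_of_eq ?_)
    rw [Fin.sum_univ_eq_sum_range (fun i => ∑ p : Fin d × Fin m,
      (x (i + 1) p - xstar p) * (F (x (i + 1)) p * a p.1 (x (i + 1)) * w p.1 xstar)) T]
    rw [show Finset.Icc 1 T = Finset.Ico 1 (T + 1) from by ext i; simp only [Finset.mem_Icc, Finset.mem_Ico]; omega,
      Finset.sum_Ico_eq_sum_range]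
    simp only [Nat.add_sub_cancel]
    refine Finset.sum_congr rfl fun i _ => ?_
    rw [show 1 + i = i + 1 from Nat.add_comm 1 i]
    refine Finset.sum_congr rfl fun p _ => ?_
    rw [hu (i + 1) p]
    ring
  -- nonnegativity and initial potential bound
  have hPhiT : (0:ℝ) ≤ ∑ p : Fin d × Fin m, w p.1 xstar * (xh (T + 1) p - xstar p) ^ 2 :=
    Finset.sum_nonneg fun p _ => mul_nonneg (hlam0 p) (sq_nonneg _)
  have hxh1X : xh 1 ∈ X := by rw [hinit]; exact hx0
  have hPhi1 : (∑ p : Fin d × Fin m, w p.1 xstar * (xh 1 p - xstar p) ^ 2) ≤ h * D ^ 2 := by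
    have s1 : (∑ p : Fin d × Fin m, w p.1 xstar * (xh 1 p - xstar p) ^ 2)
        ≤ h * ∑ p : Fin d × Fin m, (xh 1 p - xstar p) ^ 2 := by
      rw [Finset.mul_sum]
      exact Finset.sum_le_sum fun p _ => mul_le_mul_of_nonneg_right (hlamh p) (sq_nonneg _)
    have s2 : ‖xh 1 - xstar‖ ^ 2 ≤ D ^ 2 :=
      pow_le_pow_left₀ (norm_nonneg _) (hD (xh 1) hxh1X xstar hxsX) 2
    rw [← aux_normsq_sub] at s1
    nlinarith [mul_le_mul_of_nonneg_left s2 hh.le]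
  -- part 1
  have hPL : (∑ t ∈ Finset.Icc 1 T, (‖x t - xh t‖ ^ 2 + ‖x t - xh (t + 1)‖ ^ 2)) ≤
      2 * D ^ 2 * h / ℓ + (4 * η * γ / ℓ) * T := by
    have hS := SUMS T
    have m1 : (ℓ / 2) * (∑ t ∈ Finset.Icc 1 T, (‖x t - xh t‖ ^ 2 + ‖x (t - 1) - xh t‖ ^ 2))
        ≤ (ℓ / 2) * (∑ t ∈ Finset.Icc 1 T, (‖x t - xh t‖ ^ 2 + ‖x t - xh (t + 1)‖ ^ 2)) :=
      mul_le_mul_of_nonneg_left hSR (by positivity)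
    have m2 : 2 * η * (-(γ * ↑T)) ≤ 2 * η * (∑ t ∈ Finset.Icc 1 T,
        ∑ p : Fin d × Fin m, w p.1 xstar * (u t p * (x t p - xstar p))) :=
      mul_le_mul_of_nonneg_left hGM (by positivity)
    have final1 : (∑ t ∈ Finset.Icc 1 T, (‖x t - xh t‖ ^ 2 + ‖x t - xh (t + 1)‖ ^ 2)) * ℓ
        ≤ 2 * D ^ 2 * h + 4 * η * γ * ↑T := by
      linarith
    have final2 : (∑ t ∈ Finset.Icc 1 T, (‖x t - xh t‖ ^ 2 + ‖x t - xh (t + 1)‖ ^ 2))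
        ≤ (2 * D ^ 2 * h + 4 * η * γ * ↑T) / ℓ := (le_div_iff₀ hℓ).mpr final1
    calc (∑ t ∈ Finset.Icc 1 T, (‖x t - xh t‖ ^ 2 + ‖x t - xh (t + 1)‖ ^ 2))
        ≤ (2 * D ^ 2 * h + 4 * η * γ * ↑T) / ℓ := final2
      _ = 2 * D ^ 2 * h / ℓ + (4 * η * γ / ℓ) * ↑T := by ring
  refine ⟨hPL, ?_⟩
  -- part 2
  intro hT
  have hT0 : (T:ℝ) ≠ 0 := Nat.cast_ne_zero.mpr (by omega)
  have hTpos : (0:ℝ) < (T:ℝ) := by positivity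
  have hBsum : (∑ t ∈ Finset.Icc 1 T, (‖x t - xh t‖ ^ 2 + ‖x t - xh (t + 1)‖ ^ 2)) ≤
      ∑ _t ∈ Finset.Icc 1 T, (4 * η * γ / ℓ + 2 * D ^ 2 * h / (ℓ * T)) := by
    rw [Finset.sum_const, Nat.card_Icc]
    simp only [Nat.add_sub_cancel, nsmul_eq_mul]
    have e : (T:ℝ) * (4 * η * γ / ℓ + 2 * D ^ 2 * h / (ℓ * T))
        = 2 * D ^ 2 * h / ℓ + (4 * η * γ / ℓ) * T := by
      field_simp
      ring
    rw [e]
    exact hPL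
  obtain ⟨t, htmem, hle⟩ := Finset.exists_le_of_sum_le
    ⟨1, Finset.mem_Icc.mpr ⟨le_rfl, hT⟩⟩ hBsum
  refine ⟨t, htmem, ?_, ?_⟩
  · exact Real.le_sqrt_of_sq_le (by nlinarith [sq_nonneg ‖x t - xh (t + 1)‖])
  · exact Real.le_sqrt_of_sq_le (by nlinarith [sq_nonneg ‖x t - xh t‖])
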